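/- Let f be differentiable on a product of transport polytopes with the block-gradient Lipschitz property: ‖∇_i f(X) − ∇_i f(X')‖ ≤ L‖X − X'‖ for all feasible X, X'. Define R_i(X) = max_{T ∈ U(a_i,b_i)} ⟨∇_i f(X), X_i − T⟩. If X' and X'' are feasible points with X'_i = X''_i, then |R_i(X') − R_i(X'')| ≤ 2 d_i L ‖X' − X''‖, where d_i = min{√(m_i)‖a_i‖_∞, √(n_i)‖b_i‖_∞}. -/

import Mathlib

/-- The transport polytope `U(a,b)`. -/
def transportPolytope {m n : ℕ} (a : Fin m → ℝ) (b : Fin n → ℝ) :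
    Set (Matrix (Fin m) (Fin n) ℝ) :=
  {T | (∀ j k, 0 ≤ T j k) ∧ (∀ j, ∑ k, T j k = a j) ∧ (∀ k, ∑ j, T j k = b k)}

/-- The Frobenius norm of a single block. -/
noncomputable def frob {m n : ℕ} (T : Matrix (Fin m) (Fin n) ℝ) : ℝ :=
  Real.sqrt (∑ j, ∑ k, (T j k) ^ 2)

/-- The Frobenius norm of a tuple of blocks. -/
noncomputable def frobTotal {N : ℕ} {m n : Fin N → ℕ}
    (X : ∀ i, Matrix (Fin (m i)) (Fin (n i)) ℝ) : ℝ :=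
  Real.sqrt (∑ i, ∑ j, ∑ k, (X i j k) ^ 2)

/-- The Frobenius inner product. -/
noncomputable def finner {m n : ℕ} (A B : Matrix (Fin m) (Fin n) ℝ) : ℝ :=
  ∑ j, ∑ k, A j k * B j k

/-- The block stationarity residual
`R_i(X) = max_{T ∈ U(a_i,b_i)} ⟨∇_i f(X), X_i − T⟩`. -/
noncomputable def blockResidual {N : ℕ} {m n : Fin N → ℕ}
    (a : ∀ i, Fin (m i) → ℝ) (b : ∀ i, Fin (n i) → ℝ)
    (gradf : (∀ i, Matrix (Fin (m i)) (Fin (n i)) ℝ) →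
      ∀ i, Matrix (Fin (m i)) (Fin (n i)) ℝ)
    (X : ∀ i, Matrix (Fin (m i)) (Fin (n i)) ℝ) (i : Fin N) : ℝ :=
  ⨆ T : transportPolytope (a i) (b i), finner (gradf X i) (X i - (T : Matrix _ _ ℝ))

section Aux

variable {m n : ℕ}

noncomputable def matEmb {m n : ℕ} (M : Matrix (Fin m) (Fin n) ℝ) :
    EuclideanSpace ℝ (Fin m × Fin n) :=
  (WithLp.equiv 2 _).symm (fun p => M p.1 p.2)

lemma frob_eq_norm (M : Matrix (Fin m) (Fin n) ℝ) : frob M = ‖matEmb M‖ := by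
  rw [EuclideanSpace.norm_eq, frob]
  congr 1
  rw [Fintype.sum_prod_type]
  simp [matEmb, sq_abs, WithLp.equiv, Equiv.refl_apply]

lemma finner_eq_inner (A B : Matrix (Fin m) (Fin n) ℝ) :
    finner A B = inner ℝ (matEmb A) (matEmb B) := by
  rw [finner]
  rw [show (inner ℝ (matEmb A) (matEmb B) : ℝ) = ∑ p : Fin m × Fin n, A p.1 p.2 * B p.1 p.2 by
    simp [matEmb, PiLp.inner_apply, WithLp.equiv, Equiv.refl_apply, mul_comm]]
  rw [Fintype.sum_prod_type]

lemma matEmb_sub (A B : Matrix (Fin m) (Fin n) ℝ) :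
    matEmb (A - B) = matEmb A - matEmb B := rfl

lemma frob_nonneg (M : Matrix (Fin m) (Fin n) ℝ) : 0 ≤ frob M := Real.sqrt_nonneg _

lemma abs_finner_le (A B : Matrix (Fin m) (Fin n) ℝ) :
    |finner A B| ≤ frob A * frob B := by
  rw [finner_eq_inner, frob_eq_norm, frob_eq_norm]
  exact abs_real_inner_le_norm _ _

lemma finner_sub_left (A B C : Matrix (Fin m) (Fin n) ℝ) :
    finner (A - B) C = finner A C - finner B C := by
  simp [finner, sub_mul, Finset.sum_sub_distrib]

lemma frob_sub_le (A B : Matrix (Fin m) (Fin n) ℝ) :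
    frob (A - B) ≤ frob A + frob B := by
  rw [frob_eq_norm, frob_eq_norm, frob_eq_norm, matEmb_sub]
  exact norm_sub_le _ _

end Aux


lemma ciSup_abs_nonneg {k : ℕ} (g : Fin k → ℝ) : 0 ≤ ⨆ j, |g j| := by
  rcases Nat.eq_zero_or_pos k with h | h
  · subst h
    rw [Real.iSup_of_isEmpty]
  · exact le_trans (abs_nonneg (g ⟨0, h⟩))
      (le_ciSup (f := fun j => |g j|) (Set.Finite.bddAbove (Set.finite_range _)) _)

lemma frob_mem_le {m n : ℕ} {a : Fin m → ℝ} {b : Fin n → ℝ}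
    {T : Matrix (Fin m) (Fin n) ℝ} (hT : T ∈ transportPolytope a b) :
    frob T ≤ min (Real.sqrt m * (⨆ j, |a j|)) (Real.sqrt n * (⨆ k, |b k|)) := by
  obtain ⟨hpos, hrow, hcol⟩ := hT
  refine le_min ?_ ?_
  · -- row bound
    have h1 : ∑ j, ∑ k, (T j k) ^ 2 ≤ (m : ℝ) * (⨆ j, |a j|) ^ 2 := by
      calc ∑ j, ∑ k, (T j k) ^ 2 ≤ ∑ j : Fin m, (⨆ j, |a j|) ^ 2 := by
            refine Finset.sum_le_sum fun j _ => ?_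
            calc ∑ k, (T j k) ^ 2 ≤ (∑ k, T j k) ^ 2 :=
                  Finset.sum_sq_le_sq_sum_of_nonneg fun k _ => hpos j k
              _ = |a j| ^ 2 := by rw [hrow j, sq_abs]
              _ ≤ (⨆ j, |a j|) ^ 2 := by
                  refine pow_le_pow_left₀ (abs_nonneg _) ?_ 2
                  exact le_ciSup (f := fun j => |a j|) (Set.Finite.bddAbove (Set.finite_range _)) j
        _ = (m : ℝ) * (⨆ j, |a j|) ^ 2 := by
            rw [Finset.sum_const, Finset.card_univ, Fintype.card_fin, nsmul_eq_mul]
    calc frob T ≤ Real.sqrt ((m : ℝ) * (⨆ j, |a j|) ^ 2) := Real.sqrt_le_sqrt h1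
      _ = Real.sqrt m * (⨆ j, |a j|) := by
          rw [Real.sqrt_mul (Nat.cast_nonneg m), Real.sqrt_sq (ciSup_abs_nonneg a)]
  · -- column bound
    have h1 : ∑ j, ∑ k, (T j k) ^ 2 ≤ (n : ℝ) * (⨆ k, |b k|) ^ 2 := by
      rw [Finset.sum_comm]
      calc ∑ k, ∑ j, (T j k) ^ 2 ≤ ∑ k : Fin n, (⨆ k, |b k|) ^ 2 := by
            refine Finset.sum_le_sum fun k _ => ?_
            calc ∑ j, (T j k) ^ 2 ≤ (∑ j, T j k) ^ 2 :=
                  Finset.sum_sq_le_sq_sum_of_nonneg fun j _ => hpos j k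
              _ = |b k| ^ 2 := by rw [hcol k, sq_abs]
              _ ≤ (⨆ k, |b k|) ^ 2 := by
                  refine pow_le_pow_left₀ (abs_nonneg _) ?_ 2
                  exact le_ciSup (f := fun k => |b k|) (Set.Finite.bddAbove (Set.finite_range _)) k
        _ = (n : ℝ) * (⨆ k, |b k|) ^ 2 := by
            rw [Finset.sum_const, Finset.card_univ, Fintype.card_fin, nsmul_eq_mul]
    calc frob T ≤ Real.sqrt ((n : ℝ) * (⨆ k, |b k|) ^ 2) := Real.sqrt_le_sqrt h1
      _ = Real.sqrt n * (⨆ k, |b k|) := by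
          rw [Real.sqrt_mul (Nat.cast_nonneg n), Real.sqrt_sq (ciSup_abs_nonneg b)]

set_option maxHeartbeats 1000000 in
/-- If the block gradients of `f` are `L`-Lipschitz over the product of transport polytopes
and `X'`, `X''` are feasible with `X'_i = X''_i`, then
`|R_i(X') − R_i(X'')| ≤ 2 d_i L ‖X' − X''‖`, where
`d_i = min {√(m_i)·‖a_i‖_∞, √(n_i)·‖b_i‖_∞}`. -/
theorem blockResidual_lipschitz {N : ℕ} {m n : Fin N → ℕ}
    (a : ∀ i, Fin (m i) → ℝ) (b : ∀ i, Fin (n i) → ℝ)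
    (ha : ∀ i j, 0 ≤ a i j) (hb : ∀ i k, 0 ≤ b i k)
    (f : (∀ i, Matrix (Fin (m i)) (Fin (n i)) ℝ) → ℝ)
    (gradf : (∀ i, Matrix (Fin (m i)) (Fin (n i)) ℝ) →
      ∀ i, Matrix (Fin (m i)) (Fin (n i)) ℝ)
    (L : ℝ) (hL : 0 ≤ L)
    (hlip : ∀ X X' : ∀ i, Matrix (Fin (m i)) (Fin (n i)) ℝ,
      (∀ i, X i ∈ transportPolytope (a i) (b i)) →
      (∀ i, X' i ∈ transportPolytope (a i) (b i)) →
      ∀ i, frob (gradf X i - gradf X' i) ≤ L * frobTotal (fun i => X i - X' i))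
    (X' X'' : ∀ i, Matrix (Fin (m i)) (Fin (n i)) ℝ)
    (hX' : ∀ i, X' i ∈ transportPolytope (a i) (b i))
    (hX'' : ∀ i, X'' i ∈ transportPolytope (a i) (b i))
    (i : Fin N) (hEq : X' i = X'' i) :
    |blockResidual a b gradf X' i - blockResidual a b gradf X'' i| ≤
      2 * min (Real.sqrt (m i) * (⨆ j, |a i j|)) (Real.sqrt (n i) * (⨆ k, |b i k|)) *
        L * frobTotal (fun i => X' i - X'' i) := by
  set d := min (Real.sqrt (m i) * (⨆ j, |a i j|)) (Real.sqrt (n i) * (⨆ k, |b i k|)) with hd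
  have hd0 : 0 ≤ d := le_min
    (mul_nonneg (Real.sqrt_nonneg _) (ciSup_abs_nonneg _))
    (mul_nonneg (Real.sqrt_nonneg _) (ciSup_abs_nonneg _))
  have hFT0 : 0 ≤ frobTotal (fun i => X' i - X'' i) := Real.sqrt_nonneg _
  rcases isEmpty_or_nonempty (transportPolytope (a i) (b i)) with hE | hNE
  · rw [blockResidual, blockResidual, Real.iSup_of_isEmpty, Real.iSup_of_isEmpty,
      sub_zero, abs_zero]
    positivity
  · set g1 := gradf X' i
    set g2 := gradf X'' i
    have hgrad : frob (g1 - g2) ≤ L * frobTotal (fun i => X' i - X'' i) :=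
      hlip X' X'' hX' hX'' i
    have hT2d : ∀ T : transportPolytope (a i) (b i),
        frob (X' i - T.1) ≤ 2 * d := by
      intro T
      calc frob (X' i - T.1) ≤ frob (X' i) + frob T.1 :=
            frob_sub_le _ _
        _ ≤ d + d := add_le_add (frob_mem_le (hX' i)) (frob_mem_le T.2)
        _ = 2 * d := by ring
    set F : transportPolytope (a i) (b i) → ℝ :=
      fun T => finner g1 (X' i - T.1) with hF
    set G : transportPolytope (a i) (b i) → ℝ :=
      fun T => finner g2 (X' i - T.1) with hG
    have hbd : ∀ (g : Matrix (Fin (m i)) (Fin (n i)) ℝ)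
        (T : transportPolytope (a i) (b i)),
        finner g (X' i - T.1) ≤ frob g * (2 * d) := by
      intro g T
      refine (le_abs_self _).trans ((abs_finner_le _ _).trans ?_)
      exact mul_le_mul_of_nonneg_left (hT2d T) (frob_nonneg _)
    have hBF : BddAbove (Set.range F) := ⟨frob g1 * (2 * d), by
      rintro _ ⟨T, rfl⟩; exact hbd g1 T⟩
    have hBG : BddAbove (Set.range G) := ⟨frob g2 * (2 * d), by
      rintro _ ⟨T, rfl⟩; exact hbd g2 T⟩
    have hkey : ∀ T : transportPolytope (a i) (b i),
        |F T - G T| ≤ frob (g1 - g2) * (2 * d) := by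
      intro T
      rw [hF, hG]
      simp only
      rw [← finner_sub_left]
      exact (abs_finner_le _ _).trans
        (mul_le_mul_of_nonneg_left (hT2d T) (frob_nonneg _))
    have h1 : blockResidual a b gradf X' i = ⨆ T, F T := rfl
    have h2 : blockResidual a b gradf X'' i = ⨆ T, G T := by
      rw [blockResidual, ← hEq]
    rw [h1, h2]
    have habs : |(⨆ T, F T) - ⨆ T, G T| ≤ frob (g1 - g2) * (2 * d) := by
      rw [abs_le]
      constructor
      · rw [neg_le, neg_sub, sub_le_iff_le_add]
        refine ciSup_le fun T => ?_
        have := (abs_le.mp (hkey T)).1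
        have hFle : F T ≤ ⨆ T, F T := le_ciSup hBF T
        linarith
      · rw [sub_le_iff_le_add]
        refine ciSup_le fun T => ?_
        have := (abs_le.mp (hkey T)).2
        have hGle : G T ≤ ⨆ T, G T := le_ciSup hBG T
        linarith
    refine habs.trans ?_
    calc frob (g1 - g2) * (2 * d) ≤ (L * frobTotal (fun i => X' i - X'' i)) * (2 * d) :=
          mul_le_mul_of_nonneg_right hgrad (by positivity)
      _ = 2 * d * L * frobTotal (fun i => X' i - X'' i) := by ring
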